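/- Let N be a finite f-near-ring. If u : N is a unit and k : ℕ is such that k • u ≠ 0, then k • u is a unit. Consequently the set of units of N is a union of (the nonzero parts of) cyclic additive subgroups of (N,+). -/

import Mathlib

/-- In a finite f-near-ring, every nonzero additive multiple of a
unit is again a unit; hence the units form a union of (nonzero parts of) cyclic
additive subgroups. -/
theorem stmt13 {N : Type*} [AddGroup N] [Mul N] [One N] [Finite N]
    (hassoc : ∀ a b c : N, (a * b) * c = a * (b * c))
    (hdist : ∀ a b c : N, (a + b) * c = a * c + b * c)
    (honel : ∀ a : N, 1 * a = a) (honer : ∀ a : N, a * 1 = a)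
    (hzero : ∀ a : N, a * 0 = 0)
    (hf : ∀ u : N, (∃ v : N, u * v = 1 ∧ v * u = 1) → u ≠ 1 →
      ∀ n : N, n * u = n → n = 0) :
    ∀ u : N, (∃ v : N, u * v = 1 ∧ v * u = 1) →
      ∀ k : ℕ, k • u ≠ 0 → ∃ v : N, (k • u) * v = 1 ∧ v * (k • u) = 1 := by
  intro u hu k hk
  obtain ⟨v, huv, hvu⟩ := hu
  -- 0 * a = 0
  have hzm : ∀ a : N, (0 : N) * a = 0 := by
    intro a
    have h := hdist 0 0 a
    rw [add_zero] at h
    have h2 : (0 : N) * a + 0 = 0 * a + 0 * a := by rw [add_zero]; exact h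
    exact (add_left_cancel h2).symm
  -- (j • a) * c = j • (a * c)
  have hsm : ∀ (j : ℕ) (a c : N), (j • a) * c = j • (a * c) := by
    intro j a c
    induction j with
    | zero => simpa using hzm c
    | succ n ih => rw [succ_nsmul, succ_nsmul, hdist, ih]
  -- trivial near-ring case
  by_cases h10 : (1 : N) = 0
  · exfalso
    apply hk
    have hu0 : u = 0 := by rw [← honel u, h10, hzm]
    rw [hu0, smul_zero]
  set p := addOrderOf (1 : N) with hpdef
  have hp0 : 0 < p := (isOfFinAddOrder_of_finite (1 : N)).addOrderOf_pos
  have hp1 : 1 < p := by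
    rcases Nat.lt_or_ge p 2 with h | h
    · exfalso
      have hpe : p = 1 := by omega
      exact h10 (AddMonoid.addOrderOf_eq_one_iff.mp hpe)
    · omega
  haveI : NeZero p := ⟨by omega⟩
  haveI : Fact (1 < p) := ⟨hp1⟩
  -- reduction of multiples mod p
  have hmod : ∀ j : ℕ, j • (1 : N) = (j % p) • (1 : N) := by
    intro j
    conv_lhs => rw [← Nat.div_add_mod j p]
    rw [add_nsmul]
    have hz : (p * (j / p)) • (1 : N) = 0 := by
      rw [mul_nsmul, addOrderOf_nsmul_eq_zero, smul_zero]
    rw [hz, zero_add]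
  -- the canonical map ZMod p → N
  set f : ZMod p → N := fun c => c.val • (1 : N) with hfdef
  have hfnat : ∀ j : ℕ, f (j : ZMod p) = j • (1 : N) := by
    intro j
    show (ZMod.val (j : ZMod p)) • (1 : N) = j • (1 : N)
    rw [ZMod.val_natCast, ← hmod]
  have hfadd : ∀ a b : ZMod p, f (a + b) = f a + f b := by
    intro a b
    show ((a + b).val) • (1 : N) = a.val • (1 : N) + b.val • (1 : N)
    rw [ZMod.val_add, ← hmod, add_nsmul]
  have hfmul : ∀ a b : ZMod p, f (a * b) = f a * f b := by
    intro a b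
    show ((a * b).val) • (1 : N) = (a.val • (1 : N)) * (b.val • (1 : N))
    rw [ZMod.val_mul, ← hmod, hsm, honel, ← mul_nsmul']
  have hf1 : f 1 = 1 := by
    show (ZMod.val (1 : ZMod p)) • (1 : N) = 1
    rw [ZMod.val_one, one_nsmul]
  have hf0 : f 0 = 0 := by
    show (ZMod.val (0 : ZMod p)) • (1 : N) = 0
    rw [ZMod.val_zero, zero_nsmul]
  have hker : ∀ c : ZMod p, f c = 0 → c = 0 := by
    intro c h
    have hdvd : p ∣ c.val := addOrderOf_dvd_iff_nsmul_eq_zero.mpr h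
    have hlt : c.val < p := ZMod.val_lt c
    have hv0 : c.val = 0 := Nat.eq_zero_of_dvd_of_lt hdvd hlt
    exact (ZMod.val_eq_zero c).mp hv0
  have hinj : ∀ a b : ZMod p, f a = f b → a = b := by
    intro a b h
    have h3 : f (a - b) + f b = f a := by rw [← hfadd, sub_add_cancel]
    rw [h] at h3
    have h4 : f (a - b) = 0 := by
      calc f (a - b) = f (a - b) + f b - f b := by rw [add_sub_cancel_right]
        _ = f b - f b := by rw [h3]
        _ = 0 := sub_self _
    exact sub_eq_zero.mp (hker _ h4)
  -- units of ZMod p map to units of N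
  have hunit_f : ∀ c : ZMod p, IsUnit c → ∃ w : N, f c * w = 1 ∧ w * f c = 1 := by
    intro c hc
    obtain ⟨wu, rfl⟩ := hc
    refine ⟨f ↑wu⁻¹, ?_, ?_⟩
    · rw [← hfmul, Units.mul_inv, hf1]
    · rw [← hfmul, Units.inv_mul, hf1]
  -- fpf consequence: c unit, c ≠ 1 ⇒ c - 1 unit in ZMod p
  have hstep : ∀ c : ZMod p, IsUnit c → c ≠ 1 → IsUnit (c - 1) := by
    intro c hc hc1
    have hfu := hunit_f c hc
    have hne : f c ≠ 1 := fun h => hc1 (hinj _ _ (h.trans hf1.symm))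
    have hfp := hf (f c) hfu hne
    have hinj2 : Function.Injective (fun x : ZMod p => x * (c - 1)) := by
      intro x y hxy
      simp only at hxy
      have h1 : (x - y) * (c - 1) = 0 := by rw [sub_mul, hxy, sub_self]
      have h2 : (x - y) * c = x - y := by
        have h1' : (x - y) * c - (x - y) = 0 := by
          rw [← h1]; ring
        exact sub_eq_zero.mp h1'
      have h3 : f (x - y) * f c = f (x - y) := by rw [← hfmul, h2]
      have h5 : f (x - y) = 0 := hfp _ h3
      exact sub_eq_zero.mp (hker _ h5)
    have hsurj := Finite.injective_iff_surjective.mp hinj2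
    obtain ⟨y, hy⟩ := hsurj 1
    exact IsUnit.of_mul_eq_one y (by rw [mul_comm]; exact hy)
  -- every nonzero natural image in ZMod p is a unit
  have hall : ∀ j : ℕ, ((j : ZMod p) = 0) ∨ IsUnit (j : ZMod p) := by
    intro j
    induction j with
    | zero => left; simp
    | succ n ih =>
      rw [Nat.cast_succ]
      rcases ih with h | h
      · right; rw [h, zero_add]; exact isUnit_one
      · by_cases h0 : (n : ZMod p) + 1 = 0
        · left; exact h0
        · right
          have h1 : IsUnit (-(n : ZMod p)) := h.neg
          have h2 : (-(n : ZMod p)) ≠ 1 := by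
            intro he
            apply h0
            have : (n : ZMod p) = -1 := by rw [← neg_neg (n : ZMod p), he]
            rw [this, neg_add_cancel]
          have h3 : IsUnit (-(n : ZMod p) - 1) := hstep _ h1 h2
          have h4 : IsUnit (-(-(n : ZMod p) - 1)) := h3.neg
          have h5 : -(-(n : ZMod p) - 1) = (n : ZMod p) + 1 := by ring
          rwa [h5] at h4
  -- assemble
  have hfc : f (k : ZMod p) = k • (1 : N) := hfnat k
  have hku : k • u = f (k : ZMod p) * u := by rw [hfc, hsm, honel]
  have hc0 : (k : ZMod p) ≠ 0 := by
    intro h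
    apply hk
    rw [hku, h, hf0, hzm]
  have hcu : IsUnit (k : ZMod p) := (hall k).resolve_left hc0
  obtain ⟨w, hw1, hw2⟩ := hunit_f _ hcu
  refine ⟨v * w, ?_, ?_⟩
  · rw [hku, hassoc, ← hassoc u v w, huv, honel, hw1]
  · rw [hku, ← hassoc, hassoc v w (f (k : ZMod p)), hw2, honer, hvu]
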